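/- Let H be a real inner product space and 1 < p < 2. There exists a constant C_p > 0 such that for all x, y ∈ H with (x, y) ≠ (0, 0), ⟨‖x‖^(p−2)·x − ‖y‖^(p−2)·y, x − y⟩ ≥ C_p·‖x − y‖² / (‖x‖ + ‖y‖)^(2−p). -/

import Mathlib

open Real

private lemma rpow_split (p : ℝ) (hp : p ≠ 0) (hp2 : p - 2 ≠ 0) {c : ℝ} (hc : 0 ≤ c) :
    c ^ (p - 2) * c ^ (2 : ℕ) = c ^ p := by
  rcases eq_or_lt_of_le hc with h | h
  · rw [← h]
    simp [Real.zero_rpow hp, Real.zero_rpow hp2]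
  · rw [← Real.rpow_natCast c 2, ← Real.rpow_add h]
    norm_num

private lemma key_scalar (p : ℝ) (hp1 : 1 < p) (hp2 : p < 2) {a b t : ℝ}
    (hb : 0 ≤ b) (hba : b ≤ a) (ha : 0 < a) (ht : |t| ≤ a * b) :
    (p - 1) * (a ^ 2 + b ^ 2 - 2 * t) * (a + b) ^ (p - 2) ≤
      a ^ p + b ^ p - (a ^ (p - 2) + b ^ (p - 2)) * t := by
  have hq0 : 0 < p - 1 := by linarith
  have hq1 : p - 1 < 1 := by linarith
  rcases eq_or_lt_of_le hb with hb0 | hb0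
  · -- b = 0, hence t = 0
    have ht0 : t = 0 := by
      rw [← hb0] at ht; simp at ht; exact ht
    subst ht0
    rw [← hb0]
    have hz : (0:ℝ) ^ p = 0 := Real.zero_rpow (by linarith)
    have hap : a ^ (p-2) * a ^ 2 = a ^ p := rpow_split p (by linarith) (by intro h; linarith) ha.le
    have hS : (a + 0) ^ (p - 2) = a ^ (p-2) := by norm_num
    rw [hS, hz]
    have hX : 0 < a ^ (p - 2) * a ^ 2 := by positivity
    nlinarith [hap, hX, mul_pos (show (0:ℝ) < 2 - p by linarith) hX]
  · -- 0 < b ≤ a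
    obtain ⟨q, hqdef⟩ : ∃ q : ℝ, q = p - 1 := ⟨_, rfl⟩
    rw [show p - 1 = q from hqdef.symm]
    have hq0' : 0 < q := by rw [hqdef]; linarith
    have hq1' : q < 1 := by rw [hqdef]; linarith
    have hA : 0 < a ^ q := Real.rpow_pos_of_pos ha _
    have hB : 0 < b ^ q := Real.rpow_pos_of_pos hb0 _
    have habp : 0 < a + b := by linarith
    have hS : 0 < (a + b) ^ (p - 2) := Real.rpow_pos_of_pos habp _
    have hPa : 0 < a ^ (p - 2) := Real.rpow_pos_of_pos ha _
    have hPb : 0 < b ^ (p - 2) := Real.rpow_pos_of_pos hb0 _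
    -- identities
    have e1 : a * a ^ (p - 2) = a ^ q := by
      have h := (Real.rpow_add ha (p - 2) 1).symm
      rw [Real.rpow_one] at h
      rw [hqdef]
      rw [mul_comm, h]
      congr 1; ring
    have e2 : b * b ^ (p - 2) = b ^ q := by
      have h := (Real.rpow_add hb0 (p - 2) 1).symm
      rw [Real.rpow_one] at h
      rw [hqdef, mul_comm, h]
      congr 1; ring
    have e3 : a ^ p = a ^ q * a := by
      have h := (Real.rpow_add ha q 1).symm
      rw [Real.rpow_one] at h
      rw [h]
      congr 1; rw [hqdef]; ring
    have e4 : b ^ p = b ^ q * b := by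
      have h := (Real.rpow_add hb0 q 1).symm
      rw [Real.rpow_one] at h
      rw [h]
      congr 1; rw [hqdef]; ring
    have eS : (a + b) ^ q = (a + b) * (a + b) ^ (p - 2) := by
      have h := (Real.rpow_add habp (p - 2) 1).symm
      rw [Real.rpow_one] at h
      rw [mul_comm, h]
      congr 1; rw [hqdef]; ring
    -- antitonicity of negative powers
    have hanti1 : (a + b) ^ (p - 2) ≤ a ^ (p - 2) :=
      Real.rpow_le_rpow_of_nonpos ha (by linarith) (by linarith)
    have hanti2 : a ^ (p - 2) ≤ b ^ (p - 2) :=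
      Real.rpow_le_rpow_of_nonpos hb0 hba (by linarith)
    -- Bernoulli: (b/a)^q ≤ 1 + q*(b/a - 1)
    have hbern1 : (b / a) ^ q ≤ 1 + q * (b / a - 1) := by
      have := rpow_one_add_le_one_add_mul_self
        (s := b / a - 1) (by
          have : 0 ≤ b / a := div_nonneg hb ha.le
          linarith) (p := q) (by linarith) (by linarith)
      simpa using this
    have hdiv1 : (b / a) ^ q = b ^ q / a ^ q := Real.div_rpow hb ha.le q
    -- F1 : a^q - b^q ≥ q * (a+b)^(p-2) * (a - b)
    have F1 : q * (a + b) ^ (p - 2) * (a - b) ≤ a ^ q - b ^ q := by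
      rw [hdiv1] at hbern1
      have h1 : b ^ q ≤ a ^ q + q * (a ^ q / a) * (b - a) := by
        have hm := mul_le_mul_of_nonneg_left hbern1 hA.le
        calc b ^ q = a ^ q * (b ^ q / a ^ q) := by field_simp
        _ ≤ a ^ q * (1 + q * (b / a - 1)) := hm
        _ = a ^ q + q * (a ^ q / a) * (b - a) := by field_simp
      have h2 : a ^ q / a = a ^ (p - 2) := by
        rw [← e1]; field_simp
      rw [h2] at h1
      nlinarith [mul_le_mul_of_nonneg_left hanti1 (le_of_lt hq0), sub_nonneg.mpr hba,
        mul_le_mul_of_nonneg_right (mul_le_mul_of_nonneg_left hanti1 (le_of_lt hq0))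
          (sub_nonneg.mpr hba)]
    -- Bernoulli: ((a+b)/a)^q ≤ 1 + q*(b/a)
    have hbern2 : ((a + b) / a) ^ q ≤ 1 + q * (b / a) := by
      have h := rpow_one_add_le_one_add_mul_self
        (s := b / a) (by
          have : 0 ≤ b / a := div_nonneg hb ha.le
          linarith) (p := q) (by linarith) (by linarith)
      have hrw : (1 : ℝ) + b / a = (a + b) / a := by field_simp
      rw [hrw] at h
      exact h
    -- F2 : a^q + b^q ≥ (a+b) * (a+b)^(p-2)
    have F2 : (a + b) * (a + b) ^ (p - 2) ≤ a ^ q + b ^ q := by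
      rw [← eS]
      have hdiv2 : ((a + b) / a) ^ q = (a + b) ^ q / a ^ q := Real.div_rpow habp.le ha.le q
      rw [hdiv2] at hbern2
      have h1 : (a + b) ^ q ≤ a ^ q + q * (a ^ q / a) * b := by
        have hm := mul_le_mul_of_nonneg_left hbern2 hA.le
        calc (a + b) ^ q = a ^ q * ((a + b) ^ q / a ^ q) := by field_simp
        _ ≤ a ^ q * (1 + q * (b / a)) := hm
        _ = a ^ q + q * (a ^ q / a) * b := by field_simp
      have h2 : a ^ q / a = a ^ (p - 2) := by rw [← e1]; field_simp
      rw [h2] at h1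
      -- q * a^(p-2) * b ≤ q * b^(p-2) * b = q * b^q ≤ b^q
      have h3 : q * (a ^ (p - 2) * b) ≤ q * (b ^ (p - 2) * b) :=
        mul_le_mul_of_nonneg_left (mul_le_mul_of_nonneg_right hanti2 hb) hq0'.le
      have h4 : b * b ^ (p - 2) = b ^ q := e2
      nlinarith [hB]
    -- endpoint inequalities
    have hg1 : 0 ≤ (a - b) * (a ^ q - b ^ q) - q * (a - b) ^ 2 * (a + b) ^ (p - 2) := by
      have h1 := mul_le_mul_of_nonneg_left F1 (sub_nonneg.mpr hba)
      linarith [h1]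
    have hg2 : 0 ≤ (a + b) * (a ^ q + b ^ q) - q * (a + b) ^ 2 * (a + b) ^ (p - 2) := by
      have h1 := mul_le_mul_of_nonneg_left F2 habp.le
      have hpos : 0 ≤ (a + b) * ((a + b) * (a + b) ^ (p - 2)) := by positivity
      have h2 : q * ((a + b) * ((a + b) * (a + b) ^ (p - 2)))
          ≤ 1 * ((a + b) * ((a + b) * (a + b) ^ (p - 2))) :=
        mul_le_mul_of_nonneg_right (by linarith) hpos
      linarith [h1, h2]
    have htu : t ≤ a * b := (abs_le.mp ht).2
    have htl : -(a * b) ≤ t := (abs_le.mp ht).1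
    have h2ab : 0 < 2 * (a * b) := by positivity
    -- interpolation identity
    have hident : 2 * (a * b) *
        ((a ^ q * a + b ^ q * b - (a ^ (p - 2) + b ^ (p - 2)) * t)
          - q * (a ^ 2 + b ^ 2 - 2 * t) * (a + b) ^ (p - 2))
        = (a * b - t) * ((a + b) * (a ^ q + b ^ q) - q * (a + b) ^ 2 * (a + b) ^ (p - 2))
          + (a * b + t) * ((a - b) * (a ^ q - b ^ q) - q * (a - b) ^ 2 * (a + b) ^ (p - 2)) := by
      rw [← e1, ← e2]
      ring
    have hR : 0 ≤ (a * b - t) * ((a + b) * (a ^ q + b ^ q) - q * (a + b) ^ 2 * (a + b) ^ (p - 2))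
        + (a * b + t) * ((a - b) * (a ^ q - b ^ q) - q * (a - b) ^ 2 * (a + b) ^ (p - 2)) :=
      add_nonneg (mul_nonneg (by linarith) hg2) (mul_nonneg (by linarith) hg1)
    have hX : 0 ≤ (a ^ q * a + b ^ q * b - (a ^ (p - 2) + b ^ (p - 2)) * t)
        - q * (a ^ 2 + b ^ 2 - 2 * t) * (a + b) ^ (p - 2) := by
      have hmul : 2 * (a * b) * 0 ≤ 2 * (a * b) *
          ((a ^ q * a + b ^ q * b - (a ^ (p - 2) + b ^ (p - 2)) * t)
            - q * (a ^ 2 + b ^ 2 - 2 * t) * (a + b) ^ (p - 2)) := by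
        rw [mul_zero, hident]; exact hR
      exact le_of_mul_le_mul_left hmul h2ab
    rw [e3, e4]
    linarith

private lemma main_aux {H : Type*} [NormedAddCommGroup H] [InnerProductSpace ℝ H]
    (p : ℝ) (hp1 : 1 < p) (hp2 : p < 2) (x y : H) (hxy : ‖y‖ ≤ ‖x‖) (hx : x ≠ 0) :
    (p - 1) * ‖x - y‖ ^ 2 / (‖x‖ + ‖y‖) ^ (2 - p) ≤
      inner ℝ (‖x‖ ^ (p - 2) • x - ‖y‖ ^ (p - 2) • y) (x - y) := by
  have ha : 0 < ‖x‖ := norm_pos_iff.mpr hx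
  have hb : 0 ≤ ‖y‖ := norm_nonneg y
  have habp : 0 < ‖x‖ + ‖y‖ := by linarith
  have ht : |(inner ℝ x y : ℝ)| ≤ ‖x‖ * ‖y‖ := abs_real_inner_le_norm x y
  have expand : (inner ℝ (‖x‖ ^ (p - 2) • x - ‖y‖ ^ (p - 2) • y) (x - y) : ℝ)
      = ‖x‖ ^ (p - 2) * ‖x‖ ^ 2 + ‖y‖ ^ (p - 2) * ‖y‖ ^ 2
        - (‖x‖ ^ (p - 2) + ‖y‖ ^ (p - 2)) * (inner ℝ x y : ℝ) := by
    simp only [inner_sub_left, inner_sub_right, real_inner_smul_left,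
      real_inner_self_eq_norm_sq, real_inner_comm y x]
    ring
  have h1 : ‖x‖ ^ (p - 2) * ‖x‖ ^ 2 = ‖x‖ ^ p :=
    rpow_split p (by linarith) (by intro h; linarith) ha.le
  have h2 : ‖y‖ ^ (p - 2) * ‖y‖ ^ 2 = ‖y‖ ^ p :=
    rpow_split p (by linarith) (by intro h; linarith) hb
  have hnorm : ‖x - y‖ ^ 2 = ‖x‖ ^ 2 + ‖y‖ ^ 2 - 2 * (inner ℝ x y : ℝ) := by
    rw [norm_sub_sq_real]; ring
  have hkey := key_scalar p hp1 hp2 hb hxy ha ht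
  have hSpos : (0:ℝ) < (‖x‖ + ‖y‖) ^ (2 - p) := Real.rpow_pos_of_pos habp _
  rw [div_le_iff₀ hSpos, expand, hnorm, h1, h2]
  have hcancel : (‖x‖ + ‖y‖) ^ (p - 2) * (‖x‖ + ‖y‖) ^ (2 - p) = 1 := by
    rw [← Real.rpow_add habp]; norm_num
  calc (p - 1) * (‖x‖ ^ 2 + ‖y‖ ^ 2 - 2 * (inner ℝ x y : ℝ))
      = ((p - 1) * (‖x‖ ^ 2 + ‖y‖ ^ 2 - 2 * (inner ℝ x y : ℝ)) * (‖x‖ + ‖y‖) ^ (p - 2))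
          * (‖x‖ + ‖y‖) ^ (2 - p) := by
        rw [mul_assoc, mul_assoc, hcancel]; ring
    _ ≤ (‖x‖ ^ p + ‖y‖ ^ p - (‖x‖ ^ (p - 2) + ‖y‖ ^ (p - 2)) * (inner ℝ x y : ℝ))
          * (‖x‖ + ‖y‖) ^ (2 - p) :=
        mul_le_mul_of_nonneg_right hkey hSpos.le

theorem stmt_8 {H : Type*} [NormedAddCommGroup H] [InnerProductSpace ℝ H]
    (p : ℝ) (hp1 : 1 < p) (hp2 : p < 2) :
    ∃ C : ℝ, 0 < C ∧ ∀ x y : H, ¬(x = 0 ∧ y = 0) →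
      C * ‖x - y‖ ^ 2 / (‖x‖ + ‖y‖) ^ (2 - p) ≤
        inner ℝ (‖x‖ ^ (p - 2) • x - ‖y‖ ^ (p - 2) • y) (x - y) := by
  refine ⟨p - 1, by linarith, fun x y hxy => ?_⟩
  rcases le_total ‖y‖ ‖x‖ with h | h
  · have hx : x ≠ 0 := by
      intro hx0
      apply hxy
      refine ⟨hx0, ?_⟩
      rw [hx0, norm_zero] at h
      exact norm_le_zero_iff.mp h
    exact main_aux p hp1 hp2 x y h hx
  · have hy : y ≠ 0 := by
      intro hy0
      apply hxy
      refine ⟨?_, hy0⟩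
      rw [hy0, norm_zero] at h
      exact norm_le_zero_iff.mp h
    have hmain := main_aux p hp1 hp2 y x h hy
    have hsym : (inner ℝ (‖y‖ ^ (p - 2) • y - ‖x‖ ^ (p - 2) • x) (y - x) : ℝ)
        = inner ℝ (‖x‖ ^ (p - 2) • x - ‖y‖ ^ (p - 2) • y) (x - y) := by
      rw [show (‖y‖ ^ (p - 2) • y - ‖x‖ ^ (p - 2) • x)
            = -(‖x‖ ^ (p - 2) • x - ‖y‖ ^ (p - 2) • y) by abel,
        show (y - x) = -(x - y) by abel, inner_neg_neg]
    rw [hsym, norm_sub_rev y x, add_comm ‖y‖ ‖x‖] at hmain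
    exact hmain
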